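/- Lattice point counting for spheres: for all K ≥ 1 and μ ∈ ℝ and l ∈ ℤ², the number of k ∈ ℤ² with ‖k‖ ∈ [K/2, 2K] (Euclidean norm) and | ‖k + l‖ − μ | ≤ 1 is at most C·K for some absolute constant C. -/

import Mathlib

/-- The Euclidean norm of a lattice point in `ℤ²`. -/
noncomputable def znorm (k : ℤ × ℤ) : ℝ :=
  Real.sqrt ((k.1 : ℝ)^2 + (k.2 : ℝ)^2)

private lemma gap_lemma (μ : ℝ) (p q : ℤ) (hμ : 10 ≤ μ) (hp : 0 < p) (hpq : p ≤ q)
    (h1 : (μ-1)^2 ≤ 2*(p:ℝ)^2) (h2 : (q:ℝ)^2 - (p:ℝ)^2 ≤ 4*μ) : q - p ≤ 3 := by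
  by_contra hcon
  push_neg at hcon
  have h4 : (4:ℝ) ≤ (q:ℝ) - p := by exact_mod_cast (by omega : (4:ℤ) ≤ q - p)
  have hp1 : (1:ℝ) ≤ (p:ℝ) := by exact_mod_cast hp
  have hq : (p:ℝ) ≤ q := by exact_mod_cast hpq
  have hsum : (0:ℝ) ≤ (q:ℝ) + p := by linarith
  have h6 : 4*((q:ℝ)+p) ≤ ((q:ℝ)-p)*((q:ℝ)+p) := mul_le_mul_of_nonneg_right h4 hsum
  have h8 : 2*(p:ℝ) ≤ μ - 4 := by nlinarith
  have h9 : (2*(p:ℝ))*(2*(p:ℝ)) ≤ (μ-4)*(μ-4) :=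
    mul_le_mul h8 h8 (by linarith) (by linarith)
  nlinarith

private lemma card_le_four (s : Finset ℤ) (h : ∀ x ∈ s, ∀ y ∈ s, x ≤ y → y - x ≤ 3) :
    s.card ≤ 4 := by
  rcases s.eq_empty_or_nonempty with h0 | hne
  · simp [h0]
  · have hsub : s ⊆ Finset.Icc (s.min' hne) (s.min' hne + 3) := by
      intro x hx
      rw [Finset.mem_Icc]
      refine ⟨s.min'_le x hx, ?_⟩
      have := h _ (s.min'_mem hne) _ hx (s.min'_le x hx)
      omega
    have := Finset.card_le_card hsub
    rw [Int.card_Icc] at this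
    omega

private lemma half_bound (K μ : ℝ) (hK : 1 ≤ K) (hμ : 10 ≤ μ) (l : ℤ × ℤ) :
    (({k : ℤ × ℤ | |(k.1:ℝ)| ≤ 2*K ∧ |(k.2:ℝ)| ≤ 2*K ∧
      (μ-1)^2 ≤ ((k.1+l.1 : ℤ):ℝ)^2 + ((k.2+l.2 : ℤ):ℝ)^2 ∧
      ((k.1+l.1 : ℤ):ℝ)^2 + ((k.2+l.2 : ℤ):ℝ)^2 ≤ (μ+1)^2 ∧
      |k.1+l.1| ≤ |k.2+l.2|} : Set (ℤ × ℤ)).ncard : ℝ) ≤ 40*K := by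
  classical
  set A : ℤ := ⌊2*K⌋ with hA
  set B : ℤ := ⌈μ⌉ + 1 + |l.2| with hB
  set P : ℤ × ℤ → Prop := fun k =>
    (μ-1)^2 ≤ ((k.1+l.1 : ℤ):ℝ)^2 + ((k.2+l.2 : ℤ):ℝ)^2 ∧
    ((k.1+l.1 : ℤ):ℝ)^2 + ((k.2+l.2 : ℤ):ℝ)^2 ≤ (μ+1)^2 ∧
    |k.1+l.1| ≤ |k.2+l.2| with hP
  set T : Finset (ℤ × ℤ) := (Finset.Icc (-A) A ×ˢ Finset.Icc (-B) B).filter P with hT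
  -- the set is contained in T
  have hsub : {k : ℤ × ℤ | |(k.1:ℝ)| ≤ 2*K ∧ |(k.2:ℝ)| ≤ 2*K ∧
      (μ-1)^2 ≤ ((k.1+l.1 : ℤ):ℝ)^2 + ((k.2+l.2 : ℤ):ℝ)^2 ∧
      ((k.1+l.1 : ℤ):ℝ)^2 + ((k.2+l.2 : ℤ):ℝ)^2 ≤ (μ+1)^2 ∧
      |k.1+l.1| ≤ |k.2+l.2|} ⊆ (T : Set (ℤ × ℤ)) := by
    intro k hk
    obtain ⟨hk1, hk2, hlo, hhi, habs⟩ := hk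
    simp only [hT, Finset.coe_filter, Set.mem_setOf_eq, Finset.mem_product, Finset.mem_Icc]
    refine ⟨⟨⟨?_, ?_⟩, ?_, ?_⟩, hlo, hhi, habs⟩
    · have : -(2*K) ≤ (k.1:ℝ) := (abs_le.mp hk1).1
      have h2' : (-k.1 : ℝ) ≤ 2*K := by push_cast; linarith
      have := Int.le_floor.mpr (by exact_mod_cast h2' : ((-k.1 : ℤ):ℝ) ≤ 2*K)
      omega
    · exact Int.le_floor.mpr (by exact_mod_cast (abs_le.mp hk1).2)
    · -- -B ≤ k.2
      have hm2 : -(μ+1) ≤ ((k.2+l.2 : ℤ):ℝ) := by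
        nlinarith [sq_nonneg ((k.1+l.1 : ℤ):ℝ), sq_nonneg (((k.2+l.2 : ℤ):ℝ) + (μ+1))]
      have hgoal : ((-B : ℤ):ℝ) ≤ ((k.2:ℤ):ℝ) := by
        push_cast [hB]
        push_cast at hm2
        have := Int.le_ceil μ
        have h1 := le_abs_self (l.2:ℝ)
        have h2 := neg_abs_le (l.2:ℝ)
        linarith
      exact_mod_cast hgoal
    · have hm2 : ((k.2+l.2 : ℤ):ℝ) ≤ μ+1 := by
        nlinarith [sq_nonneg ((k.1+l.1 : ℤ):ℝ), sq_nonneg (((k.2+l.2 : ℤ):ℝ) - (μ+1))]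
      have hgoal : ((k.2:ℤ):ℝ) ≤ ((B : ℤ):ℝ) := by
        push_cast [hB]
        push_cast at hm2
        have := Int.le_ceil μ
        have h1 := le_abs_self (l.2:ℝ)
        have h2 := neg_abs_le (l.2:ℝ)
        linarith
      exact_mod_cast hgoal
  -- column bound
  have hcol : T.card ≤ 8 * (Finset.Icc (-A) A).card := by
    apply Finset.card_le_mul_card_image_of_maps_to (f := Prod.fst)
    · intro k hk
      rw [hT, Finset.mem_filter, Finset.mem_product] at hk
      exact hk.1.1
    · intro a _
      set colPos : Finset ℤ :=
        (Finset.Icc (-B) B).filter (fun b => P (a, b) ∧ 0 < b + l.2) with hCP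
      set colNeg : Finset ℤ :=
        (Finset.Icc (-B) B).filter (fun b => P (a, b) ∧ b + l.2 < 0) with hCN
      have hfib : ({k ∈ T | k.1 = a} : Finset (ℤ×ℤ)).card ≤ (colPos ∪ colNeg).card := by
        apply Finset.card_le_card_of_injOn Prod.snd
        · intro k hk
          rw [Finset.mem_coe, Finset.mem_filter, hT, Finset.mem_filter, Finset.mem_product] at hk
          obtain ⟨⟨⟨_, hk2B⟩, hkP⟩, hka⟩ := hk
          have hne : k.2 + l.2 ≠ 0 := by
            intro h0
            have h1 := hkP.2.2
            rw [h0] at h1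
            have h1' : |k.1 + l.1| ≤ 0 := by simpa using h1
            have : k.1 + l.1 = 0 := abs_nonpos_iff.mp h1'
            have hlo' := hkP.1
            rw [this, h0] at hlo'
            norm_num at hlo'
            nlinarith
          rw [Finset.mem_coe, Finset.mem_union, hCP, hCN, Finset.mem_filter, Finset.mem_filter]
          have hPk : P (a, k.2) := by rw [← hka]; exact hkP
          rcases lt_or_gt_of_ne hne with h | h
          · exact Or.inr ⟨hk2B, hPk, h⟩
          · exact Or.inl ⟨hk2B, hPk, h⟩
        · intro x hx y hy hxy
          rw [Finset.mem_coe, Finset.mem_filter] at hx hy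
          exact Prod.ext (hx.2.trans hy.2.symm) hxy
      have hpos : colPos.card ≤ 4 := by
        apply card_le_four
        intro x hx y hy hxy
        rw [hCP, Finset.mem_filter] at hx hy
        obtain ⟨-, hPx, hxp⟩ := hx
        obtain ⟨-, hPy, hyp⟩ := hy
        have hsq : ((a+l.1 : ℤ):ℝ)^2 ≤ ((x+l.2 : ℤ):ℝ)^2 := by
          have h' := abs_le.mp hPx.2.2
          have : (a+l.1)^2 ≤ (x+l.2)^2 := by
            calc (a+l.1)^2 ≤ |x+l.2|^2 := sq_le_sq' h'.1 h'.2
            _ = (x+l.2)^2 := sq_abs _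
          exact_mod_cast this
        have hgap := gap_lemma μ (x+l.2) (y+l.2) hμ hxp (by omega)
          (by nlinarith [hPx.1]) (by nlinarith [hPx.1, hPy.2.1])
        omega
      have hneg : colNeg.card ≤ 4 := by
        apply card_le_four
        intro x hx y hy hxy
        rw [hCN, Finset.mem_filter] at hx hy
        obtain ⟨-, hPx, hxp⟩ := hx
        obtain ⟨-, hPy, hyp⟩ := hy
        have hsq : ((a+l.1 : ℤ):ℝ)^2 ≤ ((y+l.2 : ℤ):ℝ)^2 := by
          have h' := abs_le.mp hPy.2.2
          have : (a+l.1)^2 ≤ (y+l.2)^2 := by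
            calc (a+l.1)^2 ≤ |y+l.2|^2 := sq_le_sq' h'.1 h'.2
            _ = (y+l.2)^2 := sq_abs _
          exact_mod_cast this
        have hcast1 : ((-(y+l.2) : ℤ):ℝ)^2 = ((y+l.2 : ℤ):ℝ)^2 := by push_cast; ring
        have hcast2 : ((-(x+l.2) : ℤ):ℝ)^2 = ((x+l.2 : ℤ):ℝ)^2 := by push_cast; ring
        have hgap := gap_lemma μ (-(y+l.2)) (-(x+l.2)) hμ (by omega) (by omega)
          (by rw [hcast1]; nlinarith [hPy.1]) (by rw [hcast1, hcast2]; nlinarith [hPy.1, hPx.2.1])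
        omega
      calc ({k ∈ T | k.1 = a} : Finset (ℤ×ℤ)).card ≤ (colPos ∪ colNeg).card := hfib
        _ ≤ colPos.card + colNeg.card := Finset.card_union_le _ _
        _ ≤ 8 := by omega
  -- put it together
  have hA2 : (2:ℤ) ≤ A := Int.le_floor.mpr (by push_cast; linarith)
  have hAK : (A:ℝ) ≤ 2*K := Int.floor_le _
  have hIcc : (Finset.Icc (-A) A).card = (2*A+1).toNat := by
    rw [Int.card_Icc]; congr 1; omega
  have hcard := (Set.ncard_le_ncard hsub T.finite_toSet).trans_eq (Set.ncard_coe_finset T)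
  have : ((({k : ℤ × ℤ | |(k.1:ℝ)| ≤ 2*K ∧ |(k.2:ℝ)| ≤ 2*K ∧
      (μ-1)^2 ≤ ((k.1+l.1 : ℤ):ℝ)^2 + ((k.2+l.2 : ℤ):ℝ)^2 ∧
      ((k.1+l.1 : ℤ):ℝ)^2 + ((k.2+l.2 : ℤ):ℝ)^2 ≤ (μ+1)^2 ∧
      |k.1+l.1| ≤ |k.2+l.2|}).ncard : ℤ) : ℝ) ≤ 8 * (2*(A:ℝ)+1) := by
    have h1 : (({k : ℤ × ℤ | |(k.1:ℝ)| ≤ 2*K ∧ |(k.2:ℝ)| ≤ 2*K ∧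
      (μ-1)^2 ≤ ((k.1+l.1 : ℤ):ℝ)^2 + ((k.2+l.2 : ℤ):ℝ)^2 ∧
      ((k.1+l.1 : ℤ):ℝ)^2 + ((k.2+l.2 : ℤ):ℝ)^2 ≤ (μ+1)^2 ∧
      |k.1+l.1| ≤ |k.2+l.2|}).ncard : ℤ) ≤ 8 * (2*A+1) := by
      have := hcard.trans (hcol.trans_eq (by rw [hIcc]))
      have h2 : (8 * (2*A+1).toNat : ℤ) = 8 * (2*A+1) := by
        rw [Int.toNat_of_nonneg (by omega)]
      calc (_ : ℤ) ≤ (8 * (2*A+1).toNat : ℤ) := by exact_mod_cast this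
        _ = _ := h2
    calc (_ : ℝ) ≤ ((8 * (2*A+1) : ℤ) : ℝ) := by exact_mod_cast h1
      _ = 8 * (2*(A:ℝ)+1) := by push_cast; ring
  push_cast at this ⊢
  linarith

private lemma finite_of_box (R : ℝ) (s : Set (ℤ×ℤ)) (h : ∀ k ∈ s, |(k.1:ℝ)| ≤ R ∧ |(k.2:ℝ)| ≤ R) :
    s.Finite := by
  apply Set.Finite.subset (Set.finite_Icc ((-⌈R⌉, -⌈R⌉) : ℤ×ℤ) (⌈R⌉, ⌈R⌉))
  intro k hk
  obtain ⟨h1, h2⟩ := h k hk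
  rw [Set.mem_Icc]
  have hR := Int.le_ceil R
  constructor <;> constructor
  · exact_mod_cast (by simpa using (abs_le.mp h1).1.trans' (by linarith) : -((⌈R⌉:ℤ):ℝ) ≤ (k.1:ℝ))
  · exact_mod_cast (by simpa using (abs_le.mp h2).1.trans' (by linarith) : -((⌈R⌉:ℤ):ℝ) ≤ (k.2:ℝ))
  · exact_mod_cast (abs_le.mp h1).2.trans (by linarith : R ≤ ((⌈R⌉:ℤ):ℝ))
  · exact_mod_cast (abs_le.mp h2).2.trans (by linarith : R ≤ ((⌈R⌉:ℤ):ℝ))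

private lemma znorm_nonneg (k : ℤ × ℤ) : 0 ≤ znorm k := Real.sqrt_nonneg _

private lemma znorm_abs_fst (k : ℤ × ℤ) : |(k.1:ℝ)| ≤ znorm k := by
  rw [znorm, ← Real.sqrt_sq_eq_abs]
  exact Real.sqrt_le_sqrt (by nlinarith [sq_nonneg ((k.2:ℝ))])

private lemma znorm_abs_snd (k : ℤ × ℤ) : |(k.2:ℝ)| ≤ znorm k := by
  rw [znorm, ← Real.sqrt_sq_eq_abs]
  exact Real.sqrt_le_sqrt (by nlinarith [sq_nonneg ((k.1:ℝ))])

private lemma znorm_sq (k : ℤ × ℤ) : znorm k ^ 2 = (k.1:ℝ)^2 + (k.2:ℝ)^2 :=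
  Real.sq_sqrt (by positivity)

/-- Lattice point counting for spheres: there is an absolute constant `C` such
that for all `K ≥ 1`, `μ ∈ ℝ`, `l ∈ ℤ²`, the number of `k ∈ ℤ²` with
`‖k‖ ∈ [K/2, 2K]` and `|‖k + l‖ - μ| ≤ 1` is at most `C·K`. -/
theorem lattice_point_counting_sphere :
    ∃ C > (0:ℝ), ∀ K : ℝ, 1 ≤ K → ∀ (μ : ℝ) (l : ℤ × ℤ),
      (Nat.card {k : ℤ × ℤ |
          K/2 ≤ znorm k ∧ znorm k ≤ 2*K ∧ |znorm (k + l) - μ| ≤ 1} : ℝ)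
        ≤ C * K := by
  refine ⟨1000, by norm_num, ?_⟩
  intro K hK μ l
  rw [Nat.card_coe_set_eq]
  set S : Set (ℤ × ℤ) :=
    {k : ℤ × ℤ | K/2 ≤ znorm k ∧ znorm k ≤ 2*K ∧ |znorm (k + l) - μ| ≤ 1} with hS
  have hzadd : ∀ k : ℤ × ℤ, znorm (k + l) =
      Real.sqrt (((k.1+l.1 : ℤ):ℝ)^2 + ((k.2+l.2 : ℤ):ℝ)^2) := by
    intro k; rfl
  by_cases hμ : 10 ≤ μ
  · -- large μ
    set U₁ : Set (ℤ × ℤ) := {k : ℤ × ℤ | |(k.1:ℝ)| ≤ 2*K ∧ |(k.2:ℝ)| ≤ 2*K ∧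
      (μ-1)^2 ≤ ((k.1+l.1 : ℤ):ℝ)^2 + ((k.2+l.2 : ℤ):ℝ)^2 ∧
      ((k.1+l.1 : ℤ):ℝ)^2 + ((k.2+l.2 : ℤ):ℝ)^2 ≤ (μ+1)^2 ∧
      |k.1+l.1| ≤ |k.2+l.2|} with hU₁
    set U₂ : Set (ℤ × ℤ) := {k : ℤ × ℤ | |(k.1:ℝ)| ≤ 2*K ∧ |(k.2:ℝ)| ≤ 2*K ∧
      (μ-1)^2 ≤ ((k.1+l.1 : ℤ):ℝ)^2 + ((k.2+l.2 : ℤ):ℝ)^2 ∧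
      ((k.1+l.1 : ℤ):ℝ)^2 + ((k.2+l.2 : ℤ):ℝ)^2 ≤ (μ+1)^2 ∧
      |k.2+l.2| ≤ |k.1+l.1|} with hU₂
    have hsub : S ⊆ U₁ ∪ U₂ := by
      intro k hk
      obtain ⟨h1, h2, h3⟩ := hk
      have ha : |(k.1:ℝ)| ≤ 2*K := (znorm_abs_fst k).trans h2
      have hb : |(k.2:ℝ)| ≤ 2*K := (znorm_abs_snd k).trans h2
      have hmem := abs_le.mp h3
      have hlo : (μ-1)^2 ≤ ((k.1+l.1 : ℤ):ℝ)^2 + ((k.2+l.2 : ℤ):ℝ)^2 := by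
        have h4 : μ - 1 ≤ znorm (k+l) := by linarith [hmem.1]
        have h5 : (μ-1)^2 ≤ znorm (k+l)^2 := pow_le_pow_left₀ (by linarith) h4 2
        rw [hzadd k, Real.sq_sqrt (by positivity)] at h5
        exact h5
      have hhi : ((k.1+l.1 : ℤ):ℝ)^2 + ((k.2+l.2 : ℤ):ℝ)^2 ≤ (μ+1)^2 := by
        have h4 : znorm (k+l) ≤ μ + 1 := by linarith [hmem.2]
        have h5 : znorm (k+l)^2 ≤ (μ+1)^2 := pow_le_pow_left₀ (znorm_nonneg _) h4 2
        rw [hzadd k, Real.sq_sqrt (by positivity)] at h5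
        exact h5
      rcases le_total |k.1+l.1| |k.2+l.2| with h | h
      · exact Or.inl ⟨ha, hb, hlo, hhi, h⟩
      · exact Or.inr ⟨ha, hb, hlo, hhi, h⟩
    have hfin₁ : U₁.Finite := finite_of_box (2*K) _ (fun k hk => ⟨hk.1, hk.2.1⟩)
    have hfin₂ : U₂.Finite := finite_of_box (2*K) _ (fun k hk => ⟨hk.1, hk.2.1⟩)
    have hB₁ : (U₁.ncard : ℝ) ≤ 40*K := half_bound K μ hK hμ l
    have hB₂ : (U₂.ncard : ℝ) ≤ 40*K := by
      set l' : ℤ × ℤ := (l.2, l.1) with hl'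
      set V : Set (ℤ × ℤ) := {k : ℤ × ℤ | |(k.1:ℝ)| ≤ 2*K ∧ |(k.2:ℝ)| ≤ 2*K ∧
        (μ-1)^2 ≤ ((k.1+l'.1 : ℤ):ℝ)^2 + ((k.2+l'.2 : ℤ):ℝ)^2 ∧
        ((k.1+l'.1 : ℤ):ℝ)^2 + ((k.2+l'.2 : ℤ):ℝ)^2 ≤ (μ+1)^2 ∧
        |k.1+l'.1| ≤ |k.2+l'.2|} with hV
      have hinj : Function.Injective (fun k : ℤ×ℤ => (k.2, k.1)) := by
        intro a b h
        simp only [Prod.mk.injEq] at h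
        exact Prod.ext h.2 h.1
      have himg : (fun k : ℤ×ℤ => (k.2, k.1)) '' U₂ ⊆ V := by
        rintro _ ⟨k, hk, rfl⟩
        obtain ⟨h1, h2, h3, h4, h5⟩ := hk
        exact ⟨h2, h1, by linarith, by linarith, h5⟩
      have hVfin : V.Finite := finite_of_box (2*K) _ (fun k hk => ⟨hk.1, hk.2.1⟩)
      have := Set.ncard_le_ncard himg hVfin
      rw [Set.ncard_image_of_injective _ hinj] at this
      calc (U₂.ncard : ℝ) ≤ (V.ncard : ℝ) := by exact_mod_cast this
        _ ≤ 40*K := half_bound K μ hK hμ l'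
    have hle : S.ncard ≤ U₁.ncard + U₂.ncard :=
      (Set.ncard_le_ncard hsub (hfin₁.union hfin₂)).trans (Set.ncard_union_le _ _)
    calc (S.ncard : ℝ) ≤ (U₁.ncard : ℝ) + (U₂.ncard : ℝ) := by exact_mod_cast hle
      _ ≤ 40*K + 40*K := add_le_add hB₁ hB₂
      _ ≤ 1000 * K := by linarith
  · -- small μ
    push_neg at hμ
    have hinj : Function.Injective (fun k : ℤ×ℤ => k + l) := add_left_injective l
    set T : Finset (ℤ × ℤ) := Finset.Icc (-11:ℤ) 11 ×ˢ Finset.Icc (-11:ℤ) 11 with hT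
    have himg : (fun k : ℤ×ℤ => k + l) '' S ⊆ (T : Set (ℤ×ℤ)) := by
      rintro _ ⟨k, hk, rfl⟩
      obtain ⟨-, -, h3⟩ := hk
      have hz : znorm (k+l) ≤ 11 := by
        have := (abs_le.mp h3).2
        linarith
      have hf : |((k+l).1:ℝ)| ≤ 11 := (znorm_abs_fst (k+l)).trans hz
      have hs : |((k+l).2:ℝ)| ≤ 11 := (znorm_abs_snd (k+l)).trans hz
      have hf' : |(k+l).1| ≤ (11:ℤ) := by exact_mod_cast (by push_cast; exact hf : ((|(k+l).1| : ℤ):ℝ) ≤ ((11:ℤ):ℝ))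
      have hs' : |(k+l).2| ≤ (11:ℤ) := by exact_mod_cast (by push_cast; exact hs : ((|(k+l).2| : ℤ):ℝ) ≤ ((11:ℤ):ℝ))
      simp only [hT, Finset.coe_product, Set.mem_prod, Finset.mem_coe, Finset.mem_Icc]
      exact ⟨abs_le.mp hf', abs_le.mp hs'⟩
    have h1 : S.ncard ≤ T.card := by
      have := Set.ncard_le_ncard himg T.finite_toSet
      rw [Set.ncard_image_of_injective _ hinj, Set.ncard_coe_finset] at this
      exact this
    have h2 : T.card = 529 := by
      rw [hT, Finset.card_product, Int.card_Icc]
      rfl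
    calc (S.ncard : ℝ) ≤ (T.card : ℝ) := by exact_mod_cast h1
      _ = 529 := by rw [h2]; norm_num
      _ ≤ 1000 * K := by linarith
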